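/- Let K_X and K_Y be simplicial complexes on disjoint vertex sets, with d_X = 1 + dim K_X ≥ d_Y = 1 + dim K_Y, and let K = K_X ⊔ K_Y be their disjoint union. Then N^s(K) = max{N^s(K_X), N^s(K_Y), (s−1)·d_X + d_Y}, where N^s of a complex is the maximum over s-tuples of simplexes of ∑|J_i| − |⋂ J_i|. -/

import Mathlib

/-- For `K = K_X ⊔ K_Y` the disjoint union of simplicial complexes on disjoint vertex sets
`[n]` and `{n+1, ..., n+m}`, with `d_X = 1 + dim K_X ≥ d_Y = 1 + dim K_Y`:
`N^s(K) = max{N^s(K_X), N^s(K_Y), (s−1)·d_X + d_Y}`. -/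
theorem stmt_15 (n m s : ℕ) (hs : 2 ≤ s) (KX KY : Finset (Finset (Fin (n + m + 1))))
    (hXne : KX.Nonempty) (hYne : KY.Nonempty)
    (hXdc : ∀ A ∈ KX, ∀ B ⊆ A, B ∈ KX) (hYdc : ∀ A ∈ KY, ∀ B ⊆ A, B ∈ KY)
    (hXv : ∀ A ∈ KX, ∀ v ∈ A, 1 ≤ v.val ∧ v.val ≤ n)
    (hYv : ∀ A ∈ KY, ∀ v ∈ A, n + 1 ≤ v.val ∧ v.val ≤ n + m)
    (dX dY : ℕ) (hdX : dX = KX.sup Finset.card) (hdY : dY = KY.sup Finset.card)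
    (hXY : dY ≤ dX) :
    sSup {k : ℕ | ∃ J : Fin s → Finset (Fin (n + m + 1)), (∀ i, J i ∈ KX ∪ KY) ∧
      k = (∑ i, (J i).card) - (Finset.univ.inf J).card} =
    max (max
      (sSup {k : ℕ | ∃ J : Fin s → Finset (Fin (n + m + 1)), (∀ i, J i ∈ KX) ∧
        k = (∑ i, (J i).card) - (Finset.univ.inf J).card})
      (sSup {k : ℕ | ∃ J : Fin s → Finset (Fin (n + m + 1)), (∀ i, J i ∈ KY) ∧
        k = (∑ i, (J i).card) - (Finset.univ.inf J).card}))
      ((s - 1) * dX + dY) := by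
  obtain ⟨AX, hAX⟩ := hXne
  obtain ⟨AY, hAY⟩ := hYne
  have hXe : (∅ : Finset (Fin (n+m+1))) ∈ KX := hXdc AX hAX ∅ (Finset.empty_subset _)
  have hYe : (∅ : Finset (Fin (n+m+1))) ∈ KY := hYdc AY hAY ∅ (Finset.empty_subset _)
  have hbdd : ∀ (L : Finset (Finset (Fin (n+m+1)))),
      BddAbove {k : ℕ | ∃ J : Fin s → Finset (Fin (n+m+1)), (∀ i, J i ∈ L) ∧
        k = (∑ i, (J i).card) - (Finset.univ.inf J).card} := by
    intro L
    refine ⟨s * (n+m+1), ?_⟩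
    rintro k ⟨J, hJ, rfl⟩
    calc (∑ i, (J i).card) - (Finset.univ.inf J).card ≤ ∑ i, (J i).card := Nat.sub_le _ _
    _ ≤ ∑ _i : Fin s, (n+m+1) := Finset.sum_le_sum (fun i _ => by
        simpa using Finset.card_le_univ (J i))
    _ = s * (n+m+1) := by simp [Finset.sum_const, mul_comm]
  have hne : ∀ (L : Finset (Finset (Fin (n+m+1)))), (∅ : Finset (Fin (n+m+1))) ∈ L →
      ({k : ℕ | ∃ J : Fin s → Finset (Fin (n+m+1)), (∀ i, J i ∈ L) ∧
        k = (∑ i, (J i).card) - (Finset.univ.inf J).card}).Nonempty := by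
    intro L hL
    exact ⟨_, fun _ => ∅, fun _ => hL, rfl⟩
  have hdisj : ∀ A ∈ KX, ∀ B ∈ KY, A ∩ B = ∅ := by
    intro A hA B hB
    ext v
    simp only [Finset.mem_inter, Finset.notMem_empty, iff_false, not_and]
    intro hvA hvB
    have h1 := (hXv A hA v hvA).2
    have h2 := (hYv B hB v hvB).1
    omega
  have hcardX : ∀ A ∈ KX, A.card ≤ dX := fun A hA => hdX ▸ Finset.le_sup hA
  have hcardY : ∀ B ∈ KY, B.card ≤ dY := fun B hB => hdY ▸ Finset.le_sup hB
  apply le_antisymm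
  · apply csSup_le (hne _ (Finset.mem_union_left _ hXe))
    rintro k ⟨J, hJ, rfl⟩
    by_cases hAllX : ∀ i, J i ∈ KX
    · exact le_trans (le_csSup (hbdd KX) ⟨J, hAllX, rfl⟩)
        (le_max_of_le_left (le_max_left _ _))
    by_cases hAllY : ∀ i, J i ∈ KY
    · exact le_trans (le_csSup (hbdd KY) ⟨J, hAllY, rfl⟩)
        (le_max_of_le_left (le_max_right _ _))
    · push_neg at hAllX hAllY
      obtain ⟨i0, hi0⟩ := hAllX
      obtain ⟨j0, hj0⟩ := hAllY
      have hi0Y : J i0 ∈ KY := (Finset.mem_union.1 (hJ i0)).resolve_left hi0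
      have hj0X : J j0 ∈ KX := (Finset.mem_union.1 (hJ j0)).resolve_right hj0
      have hinf : (Finset.univ.inf J).card = 0 := by
        have hsub : Finset.univ.inf J ⊆ J j0 ∩ J i0 :=
          Finset.subset_inter (Finset.inf_le (Finset.mem_univ j0))
            (Finset.inf_le (Finset.mem_univ i0))
        rw [hdisj _ hj0X _ hi0Y] at hsub
        simp [Finset.subset_empty.1 hsub]
      rw [hinf, Nat.sub_zero]
      refine le_trans ?_ (le_max_right _ _)
      rw [← Finset.add_sum_erase _ _ (Finset.mem_univ i0)]
      have h1 : (J i0).card ≤ dY := hcardY _ hi0Y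
      have h2 : ∑ i ∈ Finset.univ.erase i0, (J i).card ≤ (s - 1) * dX := by
        calc ∑ i ∈ Finset.univ.erase i0, (J i).card
            ≤ ∑ _i ∈ Finset.univ.erase i0, dX := by
              apply Finset.sum_le_sum
              intro i _
              rcases Finset.mem_union.1 (hJ i) with h | h
              · exact hcardX _ h
              · exact le_trans (hcardY _ h) hXY
          _ = (s - 1) * dX := by
              rw [Finset.sum_const, smul_eq_mul]
              congr 1
              simp [Finset.card_erase_of_mem]
      omega
  · refine max_le (max_le ?_ ?_) ?_
    · apply csSup_le (hne _ hXe)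
      rintro k ⟨J, hJ, rfl⟩
      exact le_csSup (hbdd _) ⟨J, fun i => Finset.mem_union_left _ (hJ i), rfl⟩
    · apply csSup_le (hne _ hYe)
      rintro k ⟨J, hJ, rfl⟩
      exact le_csSup (hbdd _) ⟨J, fun i => Finset.mem_union_right _ (hJ i), rfl⟩
    · obtain ⟨A, hA, hAc⟩ := Finset.exists_mem_eq_sup KX ⟨AX, hAX⟩ Finset.card
      obtain ⟨B, hB, hBc⟩ := Finset.exists_mem_eq_sup KY ⟨AY, hAY⟩ Finset.card
      have hs0 : (0 : ℕ) < s := by omega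
      have hs1 : (1 : ℕ) < s := by omega
      set i0 : Fin s := ⟨0, hs0⟩
      set i1 : Fin s := ⟨1, hs1⟩
      set J : Fin s → Finset (Fin (n+m+1)) := fun i => if i = i0 then B else A with hJdef
      have hJmem : ∀ i, J i ∈ KX ∪ KY := by
        intro i
        by_cases h : i = i0 <;> simp [hJdef, h, Finset.mem_union, hA, hB]
      have hinf : (Finset.univ.inf J).card = 0 := by
        have hsub : Finset.univ.inf J ⊆ J i1 ∩ J i0 :=
          Finset.subset_inter (Finset.inf_le (Finset.mem_univ i1))
            (Finset.inf_le (Finset.mem_univ i0))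
        have h10 : i1 ≠ i0 := by simp [i0, i1, Fin.ext_iff]
        simp only [hJdef, if_pos rfl, if_neg h10] at hsub
        rw [hdisj _ hA _ hB] at hsub
        exact Finset.card_eq_zero.2 (Finset.subset_empty.1 hsub)
      have hsum : ∑ i, (J i).card = dY + (s - 1) * dX := by
        rw [← Finset.add_sum_erase _ _ (Finset.mem_univ i0)]
        have : ∑ i ∈ Finset.univ.erase i0, (J i).card
            = ∑ _i ∈ Finset.univ.erase i0, dX := by
          apply Finset.sum_congr rfl
          intro i hi
          have : i ≠ i0 := Finset.ne_of_mem_erase hi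
          simp [hJdef, this, hdX, hAc]
        rw [this, Finset.sum_const, smul_eq_mul]
        simp only [hJdef, if_pos rfl]
        rw [hdY, hBc]
        congr 2
        simp [Finset.card_erase_of_mem]
      apply le_csSup (hbdd _)
      exact ⟨J, hJmem, by rw [hsum, hinf]; omega⟩
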